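/- Let φ₁, φ₂, ε₁, ε₂ be real numbers with 0 < φ₁ < 1, 0 < ε₁ < φ₁, and 0 < ε₂ < φ₂ < 1, and set β = 1/(ε₂·φ₁), γ = (ε₂ + φ₂)/(ε₂·φ₁), k₁ = max{1/ε₁, γ + √(β·γ)} and k₂ = β·k₁/(k₁ − γ). Then: (i) k₁ > γ (so k₂ is well defined and positive); (ii) k₁·φ₁ > 1; (iii) 1/k₁ ≤ ε₁; and (iv) (k₂·φ₂ + k₁)/(k₂·(k₁·φ₁ − 1)) ≤ ε₂. (This verifies that the counter counts chosen by the CSSCHH initialization procedure satisfy all the constraints C1–C4 required to solve the Approximate Correlated Heavy Hitters problem within the error bounds ε₁ and ε₂.) -/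

import Mathlib

theorem cs_init_satisfies_constraints
    (φ₁ φ₂ ε₁ ε₂ : ℝ)
    (hφ₁ : 0 < φ₁) (hφ₁' : φ₁ < 1)
    (hε₁ : 0 < ε₁) (hε₁φ₁ : ε₁ < φ₁)
    (hε₂ : 0 < ε₂) (hε₂φ₂ : ε₂ < φ₂) (hφ₂' : φ₂ < 1) :
    let β := 1 / (ε₂ * φ₁)
    let γ := (ε₂ + φ₂) / (ε₂ * φ₁)
    let k₁ := max (1 / ε₁) (γ + Real.sqrt (β * γ))
    let k₂ := β * k₁ / (k₁ - γ)
    k₁ > γ ∧ k₁ * φ₁ > 1 ∧ 1 / k₁ ≤ ε₁ ∧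
      (k₂ * φ₂ + k₁) / (k₂ * (k₁ * φ₁ - 1)) ≤ ε₂ := by
  intro β γ k₁ k₂
  have hβdef : β = 1 / (ε₂ * φ₁) := rfl
  have hγdef : γ = (ε₂ + φ₂) / (ε₂ * φ₁) := rfl
  have hk₂def : k₂ = β * k₁ / (k₁ - γ) := rfl
  have hφ₂pos : 0 < φ₂ := lt_trans hε₂ hε₂φ₂
  have hεφ : 0 < ε₂ * φ₁ := mul_pos hε₂ hφ₁
  have hβ : 0 < β := by rw [hβdef]; positivity
  have hγ : 0 < γ := by rw [hγdef]; positivity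
  have hs : 0 < Real.sqrt (β * γ) := Real.sqrt_pos.mpr (mul_pos hβ hγ)
  have hk₁γ : k₁ > γ := by
    calc γ < γ + Real.sqrt (β * γ) := by linarith
    _ ≤ k₁ := le_max_right _ _
  have hγφ : γ * φ₁ > 1 := by
    rw [hγdef, div_mul_eq_mul_div, gt_iff_lt, lt_div_iff₀ hεφ]
    nlinarith
  have hk₁φ : k₁ * φ₁ > 1 := by nlinarith
  have hk₁pos : 0 < k₁ := lt_trans hγ hk₁γ
  have h3 : 1 / k₁ ≤ ε₁ := by
    rw [div_le_iff₀ hk₁pos]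
    have h := le_max_left (1 / ε₁) (γ + Real.sqrt (β * γ))
    rw [div_le_iff₀ hε₁] at h
    linarith
  have hk₁γ' : (0:ℝ) < k₁ - γ := by linarith
  have hne : k₁ - γ ≠ 0 := hk₁γ'.ne'
  have h2 : ε₂ * φ₁ ≠ 0 := ne_of_gt hεφ
  have hγm : γ * (ε₂ * φ₁) = ε₂ + φ₂ := by rw [hγdef]; field_simp
  have hk₂pos : 0 < k₂ := by
    rw [hk₂def]; exact div_pos (mul_pos hβ hk₁pos) hk₁γ'
  have h6 : k₁ * φ₁ - 1 ≠ 0 := by linarith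
  have key : k₂ * (ε₂ * (k₁ * φ₁ - 1)) = k₂ * φ₂ + k₁ := by
    rw [hk₂def, hβdef]
    field_simp
    linear_combination (norm := (field_simp; ring)) hγm
  have h4 : (k₂ * φ₂ + k₁) / (k₂ * (k₁ * φ₁ - 1)) = ε₂ := by
    rw [← key]
    field_simp [hk₂pos.ne']
  exact ⟨hk₁γ, hk₁φ, h3, le_of_eq h4⟩
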